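/- Let G=(V,E) be a graph of convex sets, let h: V → ℝ be any heuristic, let S be a cut-set and S' ⊆ N_S nonempty. Then the convex relaxation value is a lower bound on the exact combinatorial value: R*_opt(S,S') ≤ C*_opt(S,S'). In particular, every simple path (v_1=s,…,v_l) with v_i ∈ S for i<l, v_l ∈ S', together with points x_{v_i} ∈ X_{v_i}, yields a feasible point of the relaxation (taking y_{uv} the indicator of the path edges, α_v the indicator of v = v_l, z_{uv} = x_u y_{uv}, z'_{uv} = x_v y_{uv}) whose objective value equals the path cost plus h(v_l). -/

import Mathlib

open scoped BigOperators Pointwise Classical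

noncomputable section

/-- A graph of convex sets: a finite directed edge set together with a nonempty
compact convex set in `ℝ^n` attached to each vertex. -/
structure GCS (V : Type*) (n : ℕ) where
  E : Finset (V × V)
  X : V → Set (EuclideanSpace ℝ (Fin n))
  nonempty : ∀ v, (X v).Nonempty
  compact : ∀ v, IsCompact (X v)
  convex : ∀ v, Convex ℝ (X v)

/-- The cost of a path of `k` vertices with chosen points `x 0, …, x (k-1)`. -/
def pathCost {n : ℕ} (k : ℕ) (x : ℕ → EuclideanSpace ℝ (Fin n)) : ℝ :=
  ∑ i ∈ Finset.range (k - 1), ‖x i - x (i + 1)‖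

namespace GCS

variable {V : Type*} {n : ℕ}

/-- `(v 0, …, v (k-1))` is a path in `G` with chosen points `x i ∈ X (v i)`. -/
def IsPathOn (G : GCS V n) (k : ℕ) (v : ℕ → V) (x : ℕ → EuclideanSpace ℝ (Fin n)) : Prop :=
  1 ≤ k ∧ (∀ i, i + 1 < k → (v i, v (i + 1)) ∈ G.E) ∧ ∀ i, i < k → x i ∈ G.X (v i)

/-- `C_opt(a,b)`: the infimum of path costs over all paths from `a` to `b`
and all choices of points (`⊤` if no such path exists). -/
def Copt (G : GCS V n) (a b : V) : EReal :=
  sInf {c : EReal | ∃ (k : ℕ) (v : ℕ → V) (x : ℕ → EuclideanSpace ℝ (Fin n)),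
    G.IsPathOn k v x ∧ v 0 = a ∧ v (k - 1) = b ∧ c = ((pathCost k x : ℝ) : EReal)}

/-- A heuristic `h` is admissible for destination `d`. -/
def Admissible (G : GCS V n) (d : V) (h : V → ℝ) : Prop :=
  h d = 0 ∧ ∀ v : V, (h v : EReal) ≤ G.Copt v d

/-- The neighborhood `N_S` of a set `S` of vertices. -/
def nbr [Fintype V] (G : GCS V n) (S : Finset V) : Finset V :=
  Finset.univ.filter fun v => v ∉ S ∧ ∃ u ∈ S, (u, v) ∈ G.E

/-- `C*_opt(S,S')`: the infimum over all paths starting at `s`, staying in `S` except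
for the last vertex, and ending at a terminal vertex in `S'`, of the path cost plus the
heuristic value of the terminal vertex. -/
def CstarOpt (G : GCS V n) (h : V → ℝ) (s : V) (S S' : Finset V) : EReal :=
  sInf {c : EReal | ∃ (k : ℕ) (v : ℕ → V) (x : ℕ → EuclideanSpace ℝ (Fin n)),
    G.IsPathOn k v x ∧ v 0 = s ∧ (∀ i, i < k - 1 → v i ∈ S) ∧ v (k - 1) ∈ S' ∧
    c = ((pathCost k x + h (v (k - 1)) : ℝ) : EReal)}

/-- The edge set `Ē` of the subgraph used by SPP*-GCS: edges leaving `S` into `S ∪ S'`. -/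
def Ebar (G : GCS V n) (S S' : Finset V) : Finset (V × V) :=
  G.E.filter fun e => e.1 ∈ S ∧ e.2 ∈ S ∪ S'

end GCS

/-- The perspective `X̄ = {(x, λ) : λ ≥ 0, x ∈ λX}` of a set `X ⊆ ℝ^n`. -/
def persp {n : ℕ} (X : Set (EuclideanSpace ℝ (Fin n))) :
    Set (EuclideanSpace ℝ (Fin n) × ℝ) :=
  {p | 0 ≤ p.2 ∧ p.1 ∈ p.2 • X}

namespace GCS

variable {V : Type*} {n : ℕ}

/-- Feasibility for the convex relaxation of SPP*-GCS on `(S, S')`. -/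
def RelaxFeasible (G : GCS V n) (s : V) (S S' : Finset V)
    (y : V × V → ℝ) (α : V → ℝ) (z z' : V × V → EuclideanSpace ℝ (Fin n)) : Prop :=
  (∀ e ∈ G.Ebar S S', y e ∈ Set.Icc (0 : ℝ) 1) ∧
  (∀ v ∈ S', α v ∈ Set.Icc (0 : ℝ) 1) ∧
  (∑ v ∈ S', α v) = 1 ∧
  (∑ e ∈ (G.Ebar S S').filter fun e => e.1 = s, y e) = 1 ∧
  (∀ v ∈ S', (∑ e ∈ (G.Ebar S S').filter fun e => e.2 = v, y e) = α v) ∧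
  (∀ v ∈ S, v ≠ s →
    (∑ e ∈ (G.Ebar S S').filter fun e => e.2 = v, z' e)
      = (∑ e ∈ (G.Ebar S S').filter fun e => e.1 = v, z e) ∧
    (∑ e ∈ (G.Ebar S S').filter fun e => e.2 = v, y e)
      = (∑ e ∈ (G.Ebar S S').filter fun e => e.1 = v, y e)) ∧
  (∀ e ∈ G.Ebar S S', (z e, y e) ∈ persp (G.X e.1) ∧ (z' e, y e) ∈ persp (G.X e.2))

/-- The objective of the convex relaxation of SPP*-GCS. -/
def relaxObj (G : GCS V n) (h : V → ℝ) (S S' : Finset V)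
    (y : V × V → ℝ) (α : V → ℝ) (z z' : V × V → EuclideanSpace ℝ (Fin n)) : ℝ :=
  (∑ e ∈ G.Ebar S S', ‖z e - z' e‖) + ∑ v ∈ S', α v * h v

/-- `R*_opt(S,S')`: the optimal value of the convex relaxation of SPP*-GCS. -/
def RstarOpt (G : GCS V n) (h : V → ℝ) (s : V) (S S' : Finset V) : EReal :=
  sInf {c : EReal | ∃ y α z z', G.RelaxFeasible s S S' y α z z' ∧
    c = ((G.relaxObj h S S' y α z z' : ℝ) : EReal)}

/-- The optimal value of the MICP for SPP*-GCS (the relaxation with binary `y` and `α`). -/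
def MICPval (G : GCS V n) (h : V → ℝ) (s : V) (S S' : Finset V) : EReal :=
  sInf {c : EReal | ∃ y α z z', G.RelaxFeasible s S S' y α z z' ∧
    (∀ e ∈ G.Ebar S S', y e = 0 ∨ y e = 1) ∧
    (∀ v ∈ S', α v = 0 ∨ α v = 1) ∧
    c = ((G.relaxObj h S S' y α z z' : ℝ) : EReal)}

end GCS

end

noncomputable section Proofs

open Finset

variable {V : Type*} {n : ℕ}

lemma sum_ind {M : Type*} [AddCommMonoid M] (T : Finset (V × V)) (m : ℕ)
    (E : ℕ → V × V) (f : ℕ → M) :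
    ∑ e ∈ T, ∑ i ∈ Finset.range m, (if e = E i then f i else 0)
      = ∑ i ∈ Finset.range m, if E i ∈ T then f i else 0 := by
  rw [Finset.sum_comm]
  exact Finset.sum_congr rfl fun i _ => Finset.sum_ite_eq' T (E i) fun _ => f i

lemma sum_single {M : Type*} [AddCommMonoid M] (m : ℕ) (E : ℕ → V × V) (f : ℕ → M)
    (hinj : ∀ a b, a < m → b < m → E a = E b → a = b) (i : ℕ) (hi : i < m) :
    ∑ j ∈ Finset.range m, (if E i = E j then f j else 0) = f i := by
  rw [Finset.sum_eq_single_of_mem i (Finset.mem_range.mpr hi)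
    (fun j hj hne => if_neg (fun hEq => hne (hinj j i (Finset.mem_range.mp hj) hi hEq.symm)))]
  exact if_pos rfl

lemma shift_sum {M : Type*} [AddCommMonoid M] (m : ℕ) (F : ℕ → M)
    (h0 : F 0 = 0) (hm : F m = 0) :
    ∑ i ∈ Finset.range m, F (i + 1) = ∑ i ∈ Finset.range m, F i := by
  have h1 := (Finset.sum_range_succ' F m).symm.trans (Finset.sum_range_succ F m)
  rwa [h0, hm, add_zero, add_zero] at h1

lemma flow_aux {M : Type*} [AddCommMonoid M] (m : ℕ) (v : ℕ → V) (w : V)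
    (T1 T2 : Finset (V × V))
    (hT1 : ∀ i, i < m → ((v i, v (i + 1)) ∈ T1 ↔ v (i + 1) = w))
    (hT2 : ∀ i, i < m → ((v i, v (i + 1)) ∈ T2 ↔ v i = w))
    (g : ℕ → M) (h0 : v 0 ≠ w) (hm : v m ≠ w) :
    (∑ i ∈ Finset.range m, if (v i, v (i + 1)) ∈ T1 then g (i + 1) else 0)
      = ∑ i ∈ Finset.range m, if (v i, v (i + 1)) ∈ T2 then g i else 0 := by
  have e1 : ∀ i ∈ Finset.range m, (if (v i, v (i + 1)) ∈ T1 then g (i + 1) else 0)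
      = (fun t => if v t = w then g t else 0) (i + 1) := fun i hi =>
    if_congr (hT1 i (Finset.mem_range.mp hi)) rfl rfl
  have e2 : ∀ i ∈ Finset.range m, (if (v i, v (i + 1)) ∈ T2 then g i else 0)
      = (fun t => if v t = w then g t else 0) i := fun i hi =>
    if_congr (hT2 i (Finset.mem_range.mp hi)) rfl rfl
  rw [Finset.sum_congr rfl e1, Finset.sum_congr rfl e2]
  exact shift_sum m (fun t => if v t = w then g t else 0) (if_neg h0) (if_neg hm)

theorem simple_feas [Fintype V] (G : GCS V n) (h : V → ℝ) (s : V)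
    (S S' : Finset V) (hs : s ∈ S) (hsub : S' ⊆ G.nbr S)
    (k : ℕ) (v : ℕ → V) (x : ℕ → EuclideanSpace ℝ (Fin n))
    (hp : G.IsPathOn k v x)
    (hinj : ∀ i j, i < k → j < k → v i = v j → i = j)
    (h0 : v 0 = s) (hS : ∀ i, i < k - 1 → v i ∈ S) (hT : v (k - 1) ∈ S') :
    G.RelaxFeasible s S S'
        (fun e => ∑ i ∈ Finset.range (k - 1), if e = (v i, v (i + 1)) then (1 : ℝ) else 0)
        (fun w => if w = v (k - 1) then 1 else 0)
        (fun e => ∑ i ∈ Finset.range (k - 1), if e = (v i, v (i + 1)) then x i else 0)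
        (fun e => ∑ i ∈ Finset.range (k - 1), if e = (v i, v (i + 1)) then x (i + 1) else 0) ∧
      G.relaxObj h S S'
        (fun e => ∑ i ∈ Finset.range (k - 1), if e = (v i, v (i + 1)) then (1 : ℝ) else 0)
        (fun w => if w = v (k - 1) then 1 else 0)
        (fun e => ∑ i ∈ Finset.range (k - 1), if e = (v i, v (i + 1)) then x i else 0)
        (fun e => ∑ i ∈ Finset.range (k - 1), if e = (v i, v (i + 1)) then x (i + 1) else 0)
        = pathCost k x + h (v (k - 1)) := by
  obtain ⟨hk1, hE, hX⟩ := hp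
  have hS'S : ∀ w ∈ S', w ∉ S := fun w hw => (Finset.mem_filter.mp (hsub hw)).2.1
  have hk2 : 2 ≤ k := by
    by_contra hc
    have hk : k - 1 = 0 := by omega
    rw [hk, h0] at hT
    exact hS'S s hT hs
  set m := k - 1 with hm
  set Y := (fun e => ∑ i ∈ Finset.range m, if e = (v i, v (i + 1)) then (1 : ℝ) else 0) with hY
  set A := (fun w => if w = v m then (1 : ℝ) else 0) with hA
  set Z := (fun e => ∑ i ∈ Finset.range m, if e = (v i, v (i + 1)) then x i else 0) with hZ
  set Z' := (fun e => ∑ i ∈ Finset.range m, if e = (v i, v (i + 1)) then x (i + 1) else 0) with hZ'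
  have hmemE : ∀ i, i < m → (v i, v (i + 1)) ∈ G.Ebar S S' := by
    intro i hi
    simp only [GCS.Ebar, Finset.mem_filter]
    refine ⟨hE i (by omega), hS i hi, ?_⟩
    by_cases h1 : i + 1 < m
    · exact Finset.mem_union_left _ (hS _ h1)
    · have h2 : i + 1 = m := by omega
      rw [h2]
      exact Finset.mem_union_right _ hT
  have hEinj : ∀ a b, a < m → b < m → ((v a, v (a + 1)) : V × V) = (v b, v (b + 1)) → a = b :=
    fun a b ha hb hab => hinj a b (by omega) (by omega) (congrArg Prod.fst hab)
  have hdich : ∀ e : V × V,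
      ((∀ i, i < m → e ≠ (v i, v (i + 1))) ∧ Y e = 0 ∧ Z e = 0 ∧ Z' e = 0) ∨
      ∃ i, i < m ∧ e = (v i, v (i + 1)) ∧ Y e = 1 ∧ Z e = x i ∧ Z' e = x (i + 1) := by
    intro e
    by_cases hc : ∃ i, i < m ∧ e = (v i, v (i + 1))
    · obtain ⟨i, hi, he⟩ := hc
      subst he
      exact Or.inr ⟨i, hi, rfl,
        sum_single m _ (fun _ => (1 : ℝ)) hEinj i hi,
        sum_single m _ (fun j => x j) hEinj i hi,
        sum_single m _ (fun j => x (j + 1)) hEinj i hi⟩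
    · push_neg at hc
      have hne : ∀ i, i < m → e ≠ (v i, v (i + 1)) := fun i hi => hc i hi
      refine Or.inl ⟨hne, ?_, ?_, ?_⟩ <;>
        exact Finset.sum_eq_zero fun j hj => if_neg (hne j (Finset.mem_range.mp hj))
  have hfilter_in : ∀ (w : V), ∀ i, i < m →
      ((v i, v (i + 1)) ∈ (G.Ebar S S').filter (fun e => e.2 = w) ↔ v (i + 1) = w) := by
    intro w i hi
    rw [Finset.mem_filter]
    exact ⟨fun hc => hc.2, fun hc => ⟨hmemE i hi, hc⟩⟩
  have hfilter_out : ∀ (w : V), ∀ i, i < m →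
      ((v i, v (i + 1)) ∈ (G.Ebar S S').filter (fun e => e.1 = w) ↔ v i = w) := by
    intro w i hi
    rw [Finset.mem_filter]
    exact ⟨fun hc => hc.2, fun hc => ⟨hmemE i hi, hc⟩⟩
  constructor
  · refine ⟨?_, ?_, ?_, ?_, ?_, ?_, ?_⟩
    · -- y e ∈ [0,1]
      intro e he
      rcases hdich e with ⟨-, hy, -, -⟩ | ⟨i, hi, -, hy, -, -⟩ <;> rw [hy] <;>
        exact ⟨by norm_num, by norm_num⟩
    · -- α ∈ [0,1]
      intro w hw
      simp only [hA]
      split <;> exact ⟨by norm_num, by norm_num⟩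
    · -- ∑ α = 1
      simp only [hA]
      rw [Finset.sum_ite_eq' S' (v m) (fun _ => (1 : ℝ)), if_pos hT]
    · -- ∑_{e.1 = s} y e = 1
      simp only [hY]
      rw [sum_ind ((G.Ebar S S').filter (fun e => e.1 = s)) m
        (fun i => (v i, v (i + 1))) (fun _ => (1 : ℝ))]
      have hc : ∀ i ∈ Finset.range m,
          (if (v i, v (i + 1)) ∈ (G.Ebar S S').filter (fun e => e.1 = s) then (1 : ℝ) else 0)
            = if i = 0 then 1 else 0 := by
        intro i hi
        rw [Finset.mem_range] at hi
        refine if_congr ?_ rfl rfl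
        rw [hfilter_out s i hi]
        constructor
        · intro h1
          exact hinj i 0 (by omega) (by omega) (h1.trans h0.symm)
        · rintro rfl
          exact h0
      rw [Finset.sum_congr rfl hc, Finset.sum_ite_eq' (Finset.range m) 0 (fun _ => (1 : ℝ)),
        if_pos (Finset.mem_range.mpr (by omega))]
    · -- ∑_{e.2 = w} y e = α w for w ∈ S'
      intro w hw
      simp only [hY, hA]
      rw [sum_ind ((G.Ebar S S').filter (fun e => e.2 = w)) m
        (fun i => (v i, v (i + 1))) (fun _ => (1 : ℝ))]
      by_cases hvw : v m = w
      · have hc : ∀ i ∈ Finset.range m,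
            (if (v i, v (i + 1)) ∈ (G.Ebar S S').filter (fun e => e.2 = w) then (1 : ℝ) else 0)
              = if i = m - 1 then 1 else 0 := by
          intro i hi
          rw [Finset.mem_range] at hi
          refine if_congr ?_ rfl rfl
          rw [hfilter_in w i hi]
          constructor
          · intro h1
            by_contra hne
            have hiS : v (i + 1) ∈ S := hS _ (by omega)
            rw [h1] at hiS
            exact hS'S w hw hiS
          · rintro rfl
            rw [(by omega : m - 1 + 1 = m)]
            exact hvw
        rw [Finset.sum_congr rfl hc,
          Finset.sum_ite_eq' (Finset.range m) (m - 1) (fun _ => (1 : ℝ)),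
          if_pos (Finset.mem_range.mpr (by omega)), if_pos hvw.symm]
      · have hc : ∀ i ∈ Finset.range m,
            (if (v i, v (i + 1)) ∈ (G.Ebar S S').filter (fun e => e.2 = w) then (1 : ℝ) else 0)
              = 0 := by
          intro i hi
          rw [Finset.mem_range] at hi
          refine if_neg ?_
          rw [hfilter_in w i hi]
          intro h1
          by_cases h2 : i + 1 < m
          · have h3 := hS _ h2
            rw [h1] at h3
            exact hS'S w hw h3
          · have h3 : i + 1 = m := by omega
            rw [h3] at h1
            exact hvw h1
        rw [Finset.sum_eq_zero hc, if_neg (fun hc2 => hvw hc2.symm)]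
    · -- flow conservation
      intro w hwS hws
      have hw0 : v 0 ≠ w := fun hc => hws ((h0.symm.trans hc).symm)
      have hwm : v m ≠ w := fun hc => hS'S w (hc ▸ hT) hwS
      constructor
      · simp only [hZ, hZ']
        rw [sum_ind ((G.Ebar S S').filter (fun e => e.2 = w)) m
          (fun i => (v i, v (i + 1))) (fun i => x (i + 1)),
          sum_ind ((G.Ebar S S').filter (fun e => e.1 = w)) m
          (fun i => (v i, v (i + 1))) (fun i => x i)]
        exact flow_aux m v w _ _ (hfilter_in w) (hfilter_out w) x hw0 hwm
      · simp only [hY]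
        rw [sum_ind ((G.Ebar S S').filter (fun e => e.2 = w)) m
          (fun i => (v i, v (i + 1))) (fun _ => (1 : ℝ)),
          sum_ind ((G.Ebar S S').filter (fun e => e.1 = w)) m
          (fun i => (v i, v (i + 1))) (fun _ => (1 : ℝ))]
        exact flow_aux m v w _ _ (hfilter_in w) (hfilter_out w) (fun _ => (1 : ℝ)) hw0 hwm
    · -- perspective constraints
      intro e he
      rcases hdich e with ⟨-, hy, hz, hz'⟩ | ⟨i, hi, heq, hy, hz, hz'⟩
      · rw [hy, hz, hz']
        constructor <;>
          exact ⟨le_refl 0, by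
            rw [Set.zero_smul_set (G.nonempty _)]
            exact Set.zero_mem_zero⟩
      · rw [hy, hz, hz', heq]
        constructor
        · refine ⟨zero_le_one, ?_⟩
          show x i ∈ (1 : ℝ) • G.X (v i)
          rw [one_smul]
          exact hX i (by omega)
        · refine ⟨zero_le_one, ?_⟩
          show x (i + 1) ∈ (1 : ℝ) • G.X (v (i + 1))
          rw [one_smul]
          exact hX (i + 1) (by omega)
  · -- objective value
    have hnorm : ∀ e, ‖Z e - Z' e‖
        = ∑ i ∈ Finset.range m, if e = (v i, v (i + 1)) then ‖x i - x (i + 1)‖ else 0 := by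
      intro e
      rcases hdich e with ⟨hne, -, hz, hz'⟩ | ⟨i, hi, heq, -, hz, hz'⟩
      · rw [hz, hz', sub_zero, norm_zero]
        exact (Finset.sum_eq_zero fun j hj =>
          if_neg (hne j (Finset.mem_range.mp hj))).symm
      · rw [hz, hz', heq]
        exact (sum_single m _ (fun j => ‖x j - x (j + 1)‖) hEinj i hi).symm
    rw [GCS.relaxObj]
    rw [Finset.sum_congr rfl (fun e _ => hnorm e),
      sum_ind (G.Ebar S S') m (fun i => (v i, v (i + 1))) (fun i => ‖x i - x (i + 1)‖)]
    have hc1 : ∀ i ∈ Finset.range m,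
        (if (v i, v (i + 1)) ∈ G.Ebar S S' then ‖x i - x (i + 1)‖ else 0)
          = ‖x i - x (i + 1)‖ := fun i hi => if_pos (hmemE i (Finset.mem_range.mp hi))
    rw [Finset.sum_congr rfl hc1]
    have hc2 : (∑ w ∈ S', A w * h w) = h (v m) := by
      simp only [hA, ite_mul, one_mul, zero_mul]
      rw [Finset.sum_ite_eq' S' (v m) h, if_pos hT]
    rw [hc2, pathCost, ← hm]



theorem exists_feasible [Fintype V] (G : GCS V n) (h : V → ℝ) (s : V)
    (S S' : Finset V) (hs : s ∈ S) (hsub : S' ⊆ G.nbr S) :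
    ∀ (k : ℕ) (v : ℕ → V) (x : ℕ → EuclideanSpace ℝ (Fin n)),
      G.IsPathOn k v x → v 0 = s → (∀ i, i < k - 1 → v i ∈ S) → v (k - 1) ∈ S' →
      ∃ y α z z', G.RelaxFeasible s S S' y α z z' ∧
        G.relaxObj h S S' y α z z' ≤ pathCost k x + h (v (k - 1)) := by
  intro k
  induction k using Nat.strong_induction_on with
  | _ k IH =>
    intro v x hp h0 hS hT
    by_cases hinj : ∀ i j, i < k → j < k → v i = v j → i = j
    · obtain ⟨hfeas, hobj⟩ := simple_feas G h s S S' hs hsub k v x hp hinj h0 hS hT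
      exact ⟨_, _, _, _, hfeas, le_of_eq hobj⟩
    · push_neg at hinj
      obtain ⟨i0, j0, hi0, hj0, hv0, hne0⟩ := hinj
      have key : ∀ i j, i < j → j < k → v i = v j →
          ∃ y α z z', G.RelaxFeasible s S S' y α z z' ∧
            G.relaxObj h S S' y α z z' ≤ pathCost k x + h (v (k - 1)) := by
        intro i j hij hjk hvij
        set δ := j - i with hδ
        set k' := k - δ with hk'
        set v' : ℕ → V := fun t => if t ≤ i then v t else v (t + δ) with hv'
        set x' : ℕ → EuclideanSpace ℝ (Fin n) := fun t => if t ≤ i then x t else x (t + δ)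
          with hx'
        obtain ⟨hk1, hE, hX⟩ := hp
        have hδpos : 0 < δ := by omega
        have hkk : k' < k := by omega
        have hk'1 : 1 ≤ k' := by omega
        have hp' : G.IsPathOn k' v' x' := by
          refine ⟨hk'1, ?_, ?_⟩
          · intro t ht
            by_cases h1 : t + 1 ≤ i
            · simp only [hv', if_pos h1, if_pos (by omega : t ≤ i)]
              exact hE t (by omega)
            · by_cases h2 : t ≤ i
              · have h3 : t = i := by omega
                subst h3
                simp only [hv', if_pos h2, if_neg h1]
                have h4 : t + 1 + δ = j + 1 := by omega
                rw [h4, hvij]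
                exact hE j (by omega)
              · simp only [hv', if_neg h1, if_neg h2]
                have h4 : t + 1 + δ = t + δ + 1 := by omega
                rw [h4]
                exact hE (t + δ) (by omega)
          · intro t ht
            by_cases h1 : t ≤ i
            · simp only [hv', hx', if_pos h1]; exact hX t (by omega)
            · simp only [hv', hx', if_neg h1]; exact hX (t + δ) (by omega)
        have h0' : v' 0 = s := by
          simp only [hv', if_pos (Nat.zero_le i)]; exact h0
        have hS2 : ∀ t, t < k' - 1 → v' t ∈ S := by
          intro t ht
          by_cases h1 : t ≤ i
          · simp only [hv', if_pos h1]; exact hS t (by omega)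
          · simp only [hv', if_neg h1]; exact hS (t + δ) (by omega)
        have hterm : v' (k' - 1) = v (k - 1) := by
          by_cases h1 : k' - 1 ≤ i
          · have h2 : k' - 1 = i := by omega
            have h3 : j = k - 1 := by omega
            rw [h2]
            simp only [hv', if_pos (le_refl i), hvij, h3]
          · simp only [hv', if_neg h1]
            congr 1
            omega
        have hT' : v' (k' - 1) ∈ S' := hterm ▸ hT
        have hcost : pathCost k' x' ≤ pathCost k x := by
          rw [pathCost, pathCost]
          by_cases hcase : j = k - 1
          · have h2 : k' - 1 = i := by omega
            rw [h2]
            calc ∑ t ∈ Finset.range i, ‖x' t - x' (t + 1)‖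
                = ∑ t ∈ Finset.range i, ‖x t - x (t + 1)‖ := by
                  refine Finset.sum_congr rfl fun t ht => ?_
                  rw [Finset.mem_range] at ht
                  simp only [hx', if_pos (by omega : t ≤ i), if_pos (by omega : t + 1 ≤ i)]
              _ ≤ ∑ t ∈ Finset.range (k - 1), ‖x t - x (t + 1)‖ :=
                  Finset.sum_le_sum_of_subset_of_nonneg
                    (Finset.range_mono (by omega : i ≤ k - 1)) (fun t _ _ => norm_nonneg _)
          · have hik : i < k' - 1 := by omega
            have q1 : ∑ t ∈ Finset.Ico 0 i, ‖x' t - x' (t + 1)‖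
                = ∑ t ∈ Finset.range i, ‖x t - x (t + 1)‖ := by
              rw [← Finset.range_eq_Ico]
              refine Finset.sum_congr rfl fun t ht => ?_
              rw [Finset.mem_range] at ht
              simp only [hx', if_pos (by omega : t ≤ i), if_pos (by omega : t + 1 ≤ i)]
            have q2 : ∑ t ∈ Finset.Ico i (i + 1), ‖x' t - x' (t + 1)‖
                = ‖x i - x (j + 1)‖ := by
              rw [Nat.Ico_succ_singleton, Finset.sum_singleton]
              simp only [hx', if_pos (le_refl i), if_neg (by omega : ¬ i + 1 ≤ i)]
              have h4 : i + 1 + δ = j + 1 := by omega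
              rw [h4]
            have q3 : ∑ t ∈ Finset.Ico (i + 1) (k' - 1), ‖x' t - x' (t + 1)‖
                = ∑ t ∈ Finset.Ico (j + 1) (k - 1), ‖x t - x (t + 1)‖ := by
              rw [Finset.sum_Ico_eq_sum_range, Finset.sum_Ico_eq_sum_range]
              have hlen : k' - 1 - (i + 1) = k - 1 - (j + 1) := by omega
              rw [hlen]
              refine Finset.sum_congr rfl fun t ht => ?_
              simp only [hx', if_neg (by omega : ¬ i + 1 + t ≤ i),
                if_neg (by omega : ¬ i + 1 + t + 1 ≤ i)]
              have e1 : i + 1 + t + δ = j + 1 + t := by omega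
              have e2 : i + 1 + t + 1 + δ = j + 1 + t + 1 := by omega
              rw [e1, e2]
            have hmid : ‖x i - x (j + 1)‖ ≤ ∑ t ∈ Finset.Ico i (j + 1), ‖x t - x (t + 1)‖ := by
              have hd := dist_le_range_sum_dist (fun r => x (i + r)) (j + 1 - i)
              have h5 : i + (j + 1 - i) = j + 1 := by omega
              simp only [dist_eq_norm, Nat.add_zero, h5] at hd
              rw [Finset.sum_Ico_eq_sum_range]
              refine le_trans hd (le_of_eq ?_)
              refine Finset.sum_congr rfl fun t ht => ?_
              have e1 : i + (t + 1) = i + t + 1 := by omega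
              rw [e1]
            have hL : ∑ t ∈ Finset.range (k' - 1), ‖x' t - x' (t + 1)‖
                = (∑ t ∈ Finset.range i, ‖x t - x (t + 1)‖)
                  + ‖x i - x (j + 1)‖
                  + ∑ t ∈ Finset.Ico (j + 1) (k - 1), ‖x t - x (t + 1)‖ := by
              conv_lhs => rw [Finset.range_eq_Ico,
                ← Finset.sum_Ico_consecutive _ (Nat.zero_le i) (by omega : i ≤ k' - 1),
                ← Finset.sum_Ico_consecutive _ (by omega : i ≤ i + 1)
                  (by omega : i + 1 ≤ k' - 1)]
              rw [q1, q2, q3, ← add_assoc]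
            have hR : ∑ t ∈ Finset.range (k - 1), ‖x t - x (t + 1)‖
                = (∑ t ∈ Finset.range i, ‖x t - x (t + 1)‖)
                  + (∑ t ∈ Finset.Ico i (j + 1), ‖x t - x (t + 1)‖)
                  + ∑ t ∈ Finset.Ico (j + 1) (k - 1), ‖x t - x (t + 1)‖ := by
              conv_lhs => rw [Finset.range_eq_Ico,
                ← Finset.sum_Ico_consecutive _ (Nat.zero_le i) (by omega : i ≤ k - 1),
                ← Finset.sum_Ico_consecutive _ (by omega : i ≤ j + 1)
                  (by omega : j + 1 ≤ k - 1),
                ← Finset.range_eq_Ico]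
              rw [← add_assoc]
            rw [hL, hR]
            exact add_le_add_left (add_le_add_right hmid _) _
        obtain ⟨y, α, z, z', hfeas, hobj⟩ := IH k' hkk v' x' hp' h0' hS2 hT'
        refine ⟨y, α, z, z', hfeas, hobj.trans ?_⟩
        rw [hterm]
        exact add_le_add_left hcost (h (v (k - 1)))
      rcases Nat.lt_or_ge i0 j0 with hlt | hge
      · exact key i0 j0 hlt hj0 hv0
      · exact key j0 i0 (by omega) hi0 hv0.symm


end Proofs

/-- The convex relaxation lower-bounds the exact combinatorial value:
`R*_opt(S,S') ≤ C*_opt(S,S')`.  In particular, every simple path from `s` through `S`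
ending in `S'`, with chosen points, yields a feasible point of the relaxation (with `y`
the indicator of the path edges, `α` the indicator of the terminal vertex,
`z_{uv} = x_u y_{uv}`, `z'_{uv} = x_v y_{uv}`) whose objective value equals the path cost
plus the heuristic value at the terminal vertex. -/
theorem stmt4 {V : Type*} [Fintype V] {n : ℕ} (G : GCS V n) (h : V → ℝ) (s d : V)
    (S S' : Finset V) (hs : s ∈ S) (hd : d ∉ S) (hsub : S' ⊆ G.nbr S)
    (hne : S'.Nonempty) :
    G.RstarOpt h s S S' ≤ G.CstarOpt h s S S' ∧
    ∀ (k : ℕ) (v : ℕ → V) (x : ℕ → EuclideanSpace ℝ (Fin n)),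
      G.IsPathOn k v x →
      (∀ i j, i < k → j < k → v i = v j → i = j) →
      v 0 = s → (∀ i, i < k - 1 → v i ∈ S) → v (k - 1) ∈ S' →
      (G.RelaxFeasible s S S'
          (fun e => ∑ i ∈ Finset.range (k - 1), if e = (v i, v (i + 1)) then (1 : ℝ) else 0)
          (fun w => if w = v (k - 1) then 1 else 0)
          (fun e => ∑ i ∈ Finset.range (k - 1), if e = (v i, v (i + 1)) then x i else 0)
          (fun e => ∑ i ∈ Finset.range (k - 1), if e = (v i, v (i + 1)) then x (i + 1) else 0) ∧
        G.relaxObj h S S'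
          (fun e => ∑ i ∈ Finset.range (k - 1), if e = (v i, v (i + 1)) then (1 : ℝ) else 0)
          (fun w => if w = v (k - 1) then 1 else 0)
          (fun e => ∑ i ∈ Finset.range (k - 1), if e = (v i, v (i + 1)) then x i else 0)
          (fun e => ∑ i ∈ Finset.range (k - 1), if e = (v i, v (i + 1)) then x (i + 1) else 0)
          = pathCost k x + h (v (k - 1))) := by
  constructor
  · rw [GCS.RstarOpt, GCS.CstarOpt]
    refine le_sInf ?_
    rintro c ⟨k, v, x, hp, h0, hS, hT, rfl⟩
    obtain ⟨y, α, z, z', hfeas, hobj⟩ := exists_feasible G h s S S' hs hsub k v x hp h0 hS hT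
    refine le_trans (sInf_le ⟨y, α, z, z', hfeas, rfl⟩) ?_
    exact EReal.coe_le_coe_iff.mpr hobj
  · intro k v x hp hinj h0 hS hT
    exact simple_feas G h s S S' hs hsub k v x hp hinj h0 hS hT
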